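/- Let p be a probability vector with a unique maximizer y*, let q > 1 and λ > 0. Then the one-hot vector e^{(y*)} is the unique minimizer over the k-simplex of the combined objective ∑_y p_y (1 - f_y^q)/q + λ·(−log max_y f_y). -/

import Mathlib

open Finset

lemma onehot_gce_sum {k : ℕ} (p : Fin k → ℝ) (q : ℝ) (hq0 : 0 < q) (i : Fin k)
    (hpsum : ∑ j, p j = 1) :
    ∑ y, p y * ((1 - (if y = i then (1:ℝ) else 0) ^ q) / q) = (1 - p i) / q := by
  have h : ∀ y : Fin k, ((if y = i then (1:ℝ) else 0) : ℝ) ^ q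
      = (if y = i then (1:ℝ) else 0) := by
    intro y
    split
    · simp
    · simp [Real.zero_rpow (ne_of_gt hq0)]
  calc ∑ y, p y * ((1 - (if y = i then (1:ℝ) else 0) ^ q) / q)
      = ∑ y, (p y - (if y = i then p y else 0)) / q := by
        apply Finset.sum_congr rfl; intro y _
        rw [h y]; split <;> ring
    _ = (∑ y, p y - ∑ y, (if y = i then p y else 0)) / q := by
        rw [← Finset.sum_sub_distrib, Finset.sum_div]
    _ = (1 - p i) / q := by
        rw [hpsum, Finset.sum_ite_eq' Finset.univ i p]
        simp

/-- Corollary 1: for q > 1 and λ > 0, the one-hot vector at the unique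
maximizer of p is the unique minimizer over the simplex of the GCE risk plus
the bootstrapping term −log max_y f_y. -/
theorem gce_bs_unique_minimizer (k : ℕ) (hk : 0 < k) (p : Fin k → ℝ)
    (hp : ∀ i, 0 ≤ p i) (hpsum : ∑ i, p i = 1)
    (q lam : ℝ) (hq : 1 < q) (hlam : 0 < lam)
    (ystar : Fin k) (hstar : ∀ y, y ≠ ystar → p y < p ystar) :
    haveI : Nonempty (Fin k) := ⟨⟨0, hk⟩⟩
    let J : (Fin k → ℝ) → ℝ := fun f =>
      (∑ y, p y * ((1 - f y ^ q) / q)) +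
        lam * (- Real.log (Finset.univ.sup' Finset.univ_nonempty f))
    let e : Fin k → ℝ := fun y => if y = ystar then (1 : ℝ) else 0
    (∀ f : Fin k → ℝ, (∀ i, 0 ≤ f i) → (∑ i, f i = 1) → J e ≤ J f) ∧
    (∀ f : Fin k → ℝ, (∀ i, 0 ≤ f i) → (∑ i, f i = 1) → J f = J e → f = e) := by
  haveI : Nonempty (Fin k) := ⟨⟨0, hk⟩⟩
  intro J e
  have hq0 : (0:ℝ) < q := lt_trans one_pos hq
  -- value of J at e
  have hsupe : Finset.univ.sup' Finset.univ_nonempty e = 1 := by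
    apply le_antisymm
    · apply Finset.sup'_le
      intro i _
      simp only [e]
      split <;> norm_num
    · have := Finset.le_sup' e (Finset.mem_univ ystar)
      exact (show (1:ℝ) = e ystar by simp [e]).trans_le this
  have hJe : J e = (1 - p ystar) / q := by
    simp only [J, hsupe, Real.log_one, neg_zero, mul_zero, add_zero]
    exact onehot_gce_sum p q hq0 ystar hpsum
  -- lower bound on GCE part for any simplex f
  have hGCE : ∀ f : Fin k → ℝ, (∀ i, 0 ≤ f i) → (∑ i, f i = 1) →
      (1 - p ystar) / q ≤ ∑ y, p y * ((1 - f y ^ q) / q) := by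
    intro f hf hfsum
    have hfle1 : ∀ i, f i ≤ 1 := by
      intro i
      calc f i ≤ ∑ j, f j :=
        Finset.single_le_sum (fun j _ => hf j) (Finset.mem_univ i)
        _ = 1 := hfsum
    have hpow : ∀ y, f y ^ q ≤ f y := by
      intro y
      rcases eq_or_lt_of_le (hf y) with h | h
      · rw [← h, Real.zero_rpow (ne_of_gt hq0)]
      · calc f y ^ q ≤ f y ^ (1:ℝ) :=
          Real.rpow_le_rpow_of_exponent_ge h (hfle1 y) (le_of_lt hq)
          _ = f y := Real.rpow_one _
    have hpf : ∑ y, p y * f y ≤ p ystar := by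
      calc ∑ y, p y * f y ≤ ∑ y, p ystar * f y := by
            apply Finset.sum_le_sum
            intro y _
            rcases eq_or_ne y ystar with h | h
            · rw [h]
            · exact mul_le_mul_of_nonneg_right (le_of_lt (hstar y h)) (hf y)
        _ = p ystar * ∑ y, f y := by rw [Finset.mul_sum]
        _ = p ystar := by rw [hfsum, mul_one]
    have key : ∑ y, p y * ((1 - f y) / q) = (1 - ∑ y, p y * f y) / q := by
      have h1 : ∀ y ∈ Finset.univ, p y * ((1 - f y) / q) = (p y - p y * f y) / q :=
        fun y _ => by ring
      rw [Finset.sum_congr rfl h1, ← Finset.sum_div, Finset.sum_sub_distrib, hpsum]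
    calc (1 - p ystar) / q ≤ (1 - ∑ y, p y * f y) / q := by
          apply div_le_div_of_nonneg_right (by linarith) hq0.le
      _ = ∑ y, p y * ((1 - f y) / q) := key.symm
      _ ≤ ∑ y, p y * ((1 - f y ^ q) / q) := by
          apply Finset.sum_le_sum
          intro y _
          apply mul_le_mul_of_nonneg_left ?_ (hp y)
          apply div_le_div_of_nonneg_right (by linarith [hpow y]) hq0.le
  -- log term is nonneg on the simplex
  have hlog : ∀ f : Fin k → ℝ, (∀ i, 0 ≤ f i) → (∑ i, f i = 1) →
      0 ≤ - Real.log (Finset.univ.sup' Finset.univ_nonempty f) := by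
    intro f hf hfsum
    have h1 : Finset.univ.sup' Finset.univ_nonempty f ≤ 1 := by
      apply Finset.sup'_le
      intro i _
      calc f i ≤ ∑ j, f j :=
        Finset.single_le_sum (fun j _ => hf j) (Finset.mem_univ i)
        _ = 1 := hfsum
    have h0 : (0:ℝ) ≤ Finset.univ.sup' Finset.univ_nonempty f :=
      le_trans (hf (Classical.arbitrary _))
        (Finset.le_sup' f (Finset.mem_univ _))
    simpa using Real.log_nonpos h0 h1
  constructor
  · intro f hf hfsum
    have := hGCE f hf hfsum
    have := hlog f hf hfsum
    have h2 : 0 ≤ lam * (- Real.log (Finset.univ.sup' Finset.univ_nonempty f)) :=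
      mul_nonneg hlam.le (hlog f hf hfsum)
    simp only [J, hJe] at *
    linarith
  · intro f hf hfsum hJf
    -- equality forces the log term to vanish
    have h1 := hGCE f hf hfsum
    have h2 := hlog f hf hfsum
    have hlog0 : Real.log (Finset.univ.sup' Finset.univ_nonempty f) = 0 := by
      have hJf' : (∑ y, p y * ((1 - f y ^ q) / q)) +
          lam * (- Real.log (Finset.univ.sup' Finset.univ_nonempty f))
          = (1 - p ystar) / q := by
        rw [← hJe]; exact hJf
      nlinarith [mul_nonneg hlam.le h2]
    have h0 : (0:ℝ) ≤ Finset.univ.sup' Finset.univ_nonempty f :=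
      le_trans (hf (Classical.arbitrary _)) (Finset.le_sup' f (Finset.mem_univ _))
    have hle1 : Finset.univ.sup' Finset.univ_nonempty f ≤ 1 := by
      apply Finset.sup'_le
      intro i _
      calc f i ≤ ∑ j, f j :=
        Finset.single_le_sum (fun j _ => hf j) (Finset.mem_univ i)
        _ = 1 := hfsum
    have hsup1 : Finset.univ.sup' Finset.univ_nonempty f = 1 := by
      rcases (Real.log_eq_zero).mp hlog0 with h | h | h
      · exfalso
        have hall0 : ∀ i, f i = 0 := by
          intro i
          have hle : f i ≤ 0 := h ▸ Finset.le_sup' f (Finset.mem_univ i)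
          exact le_antisymm hle (hf i)
        have : (∑ i, f i) = 0 := Finset.sum_eq_zero (fun i _ => hall0 i)
        rw [hfsum] at this; norm_num at this
      · exact h
      · exfalso; linarith
    -- get the index where f attains 1
    obtain ⟨i0, _, hi0⟩ := Finset.exists_mem_eq_sup' Finset.univ_nonempty f
    have hfi0 : f i0 = 1 := by rw [← hi0, hsup1]
    have hone : ∀ j, f j = if j = i0 then (1:ℝ) else 0 := by
      intro j
      rcases eq_or_ne j i0 with h | h
      · simp [h, hfi0]
      · simp only [h, if_neg h]
        have hrest : ∑ x ∈ Finset.univ.erase i0, f x = 0 := by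
          have := Finset.add_sum_erase Finset.univ f (Finset.mem_univ i0)
          rw [hfsum, hfi0] at this
          linarith
        have := Finset.sum_eq_zero_iff_of_nonneg
          (fun x _ => hf x) |>.mp hrest j (by simp [h])
        exact this
    -- compute J f
    have hJfval : J f = (1 - p i0) / q := by
      have hfeq : f = fun y => if y = i0 then (1:ℝ) else 0 := funext hone
      simp only [J, hsup1, Real.log_one, neg_zero, mul_zero, add_zero]
      rw [hfeq]
      exact onehot_gce_sum p q hq0 i0 hpsum
    have hpi0 : p i0 = p ystar := by
      have : (1 - p i0) / q = (1 - p ystar) / q := by rw [← hJfval, hJf, hJe]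
      field_simp at this
      linarith
    have hi0star : i0 = ystar := by
      by_contra h
      exact absurd hpi0 (ne_of_lt (hstar i0 h))
    funext j
    rw [hone j, hi0star]
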